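/- If h : [0,∞) → [0,∞) is continuous, non-decreasing and unbounded, then sup { ∫_B h(|u|) e^{4π u^2} dx : u ∈ H^1_0(B), ‖∇u‖_2 ≤ 1 } = +∞, where B is the unit disk in R^2. In particular the supremum over the Moser family m_t, t → 0, is infinite. -/

import Mathlib

open MeasureTheory Metric Set
open scoped RealInnerProductSpace

noncomputable abbrev E2 := EuclideanSpace ℝ (Fin 2)

set_option synthInstance.maxHeartbeats 1000000
set_option maxHeartbeats 1000000

lemma moser_vol_ball (r : ℝ) (hr : 0 ≤ r) :
    (volume (ball (0:E2) r)).toReal = Real.pi * r^2 := by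
  rw [EuclideanSpace.volume_ball]
  simp only [Fintype.card_fin, Real.sq_sqrt Real.pi_nonneg]
  norm_num [Real.Gamma_two]
  rw [ENNReal.toReal_ofReal hr, ENNReal.toReal_ofReal Real.pi_nonneg]; ring

lemma moser_lip (c T t : ℝ) (ht : 0 < t) (ht1 : t ≤ 1) :
    ∃ L, LipschitzWith L (fun x : E2 => -(c/T) * Real.log (max (min ‖x‖ 1) t)) := by
  set C : NNReal := ‖c/T/t‖₊ with hC
  have hflog : LipschitzOnWith C (fun s => -(c/T) * Real.log s) (Icc t 1) := by
    apply Convex.lipschitzOnWith_of_nnnorm_hasDerivWithin_le (f' := fun s => -(c/T) * s⁻¹)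
      (convex_Icc t 1)
    · intro x hx
      exact ((Real.hasDerivAt_log (ne_of_gt (lt_of_lt_of_le ht hx.1))).const_mul
        (-(c/T))).hasDerivWithinAt
    · intro x hx
      have hx0 : 0 < x := lt_of_lt_of_le ht hx.1
      have : ‖-(c/T) * x⁻¹‖ ≤ ‖c/T/t‖ := by
        rw [norm_mul, norm_neg, Real.norm_eq_abs, Real.norm_eq_abs, Real.norm_eq_abs,
          abs_inv, abs_of_pos hx0, div_eq_mul_inv (c/T) t, abs_mul, abs_inv, abs_of_pos ht]
        exact mul_le_mul_of_nonneg_left (inv_anti₀ ht hx.1) (abs_nonneg _)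
      exact_mod_cast this
  have hclamp : LipschitzWith 1 (fun r : ℝ => max (min r 1) t) :=
    (LipschitzWith.id.min_const 1).max_const t
  have hmaps : MapsTo (fun r : ℝ => max (min r 1) t) univ (Icc t 1) := by
    intro r _
    exact ⟨le_max_right _ _, max_le (min_le_right _ _) ht1⟩
  have hF : LipschitzWith (C * 1) (fun r : ℝ => -(c/T) * Real.log (max (min r 1) t)) := by
    rw [← lipschitzOnWith_univ]
    exact hflog.comp (hclamp.lipschitzOnWith) hmaps
  exact ⟨_, hF.comp lipschitzWith_one_norm⟩

lemma moser_polar (c T t : ℝ) (hT : 0 < T) (ht : 0 < t) (ht1 : t < 1)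
    (hlt : Real.log t = -T) :
    ∫ x : E2, (Ioo t 1).indicator (fun r => (c/(T*r))^2) ‖x‖ = 2 * Real.pi * c^2 / T := by
  rw [MeasureTheory.integral_fun_norm_addHaar volume
    (fun r => (Ioo t 1).indicator (fun r => (c/(T*r))^2) r)]
  have hdim : Module.finrank ℝ E2 = 2 := by simp [finrank_euclideanSpace]
  rw [hdim]
  have h1 : ∀ y : ℝ, y ^ (2-1) • (Ioo t 1).indicator (fun r => (c/(T*r))^2) y
      = (Ioo t 1).indicator (fun r => r * (c/(T*r))^2) y := by
    intro y
    simp only [show (2-1:ℕ)=1 from rfl, pow_one, smul_eq_mul]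
    by_cases hy : y ∈ Ioo t 1
    · rw [Set.indicator_of_mem hy, Set.indicator_of_mem hy]
    · rw [Set.indicator_of_notMem hy, Set.indicator_of_notMem hy, mul_zero]
  rw [MeasureTheory.integral_congr_ae (Filter.Eventually.of_forall h1)]
  rw [MeasureTheory.setIntegral_indicator measurableSet_Ioo]
  have h2 : Ioi (0:ℝ) ∩ Ioo t 1 = Ioo t 1 :=
    inter_eq_self_of_subset_right (fun y hy => lt_trans ht hy.1)
  rw [h2]
  have h3 : ∀ y ∈ Ioo t 1, y * (c/(T*y))^2 = (c/T)^2 * y⁻¹ := by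
    intro y hy
    have hy0 : y ≠ 0 := ne_of_gt (lt_trans ht hy.1)
    field_simp
  rw [MeasureTheory.setIntegral_congr_fun measurableSet_Ioo h3,
    MeasureTheory.integral_const_mul]
  have h4 : ∫ y in Ioo t 1, y⁻¹ = T := by
    rw [← MeasureTheory.integral_Ioc_eq_integral_Ioo,
      ← intervalIntegral.integral_of_le ht1.le, integral_inv_of_pos ht zero_lt_one,
      Real.log_div one_ne_zero (ne_of_gt ht), Real.log_one, hlt]
    ring
  rw [h4, measureReal_def, moser_vol_ball 1 zero_le_one]
  simp only [smul_eq_mul, nsmul_eq_mul]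
  push_cast
  field_simp

lemma moser_fderiv_bound (c T t : ℝ) (hc0 : 0 ≤ c) (hT : 0 < T) (ht : 0 < t) (ht1 : t < 1)
    (x : E2) (hxt : ‖x‖ ≠ t) (hx1 : ‖x‖ < 1) :
    ‖fderiv ℝ (fun x : E2 => -(c/T) * Real.log (max (min ‖x‖ 1) t)) x‖^2
      ≤ (Ioo t 1).indicator (fun r => (c/(T*r))^2) ‖x‖ := by
  set u : E2 → ℝ := fun x : E2 => -(c/T) * Real.log (max (min ‖x‖ 1) t) with hu
  rcases lt_or_gt_of_ne hxt with hlt | hgt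
  · have hev : u =ᶠ[nhds x] fun _ => -(c/T) * Real.log t := by
      refine Filter.eventuallyEq_of_mem (ball_mem_nhds x (by linarith : (0:ℝ) < t - ‖x‖)) ?_
      intro y hy
      have hyt : ‖y‖ < t := by
        have := norm_sub_norm_le y x
        simp only [mem_ball, dist_eq_norm] at hy
        linarith
      have : max (min ‖y‖ 1) t = t := max_eq_right (le_trans (min_le_left _ _) hyt.le)
      simp only [u, this]
    rw [hev.fderiv_eq, fderiv_fun_const]
    have : ‖x‖ ∉ Ioo t 1 := fun hmem => absurd hmem.1 (not_lt.2 hlt.le)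
    rw [Set.indicator_of_notMem this]
    simp
  · have hx0 : 0 < ‖x‖ := lt_trans ht hgt
    have hopen : IsOpen {y : E2 | t < ‖y‖ ∧ ‖y‖ < 1} :=
      (isOpen_lt continuous_const continuous_norm).inter
        (isOpen_lt continuous_norm continuous_const)
    have hev : u =ᶠ[nhds x] fun y => -(c/(2*T)) * Real.log (‖y‖^2) := by
      refine Filter.eventuallyEq_of_mem (hopen.mem_nhds ⟨hgt, hx1⟩) ?_
      intro y hy
      have hclamp : max (min ‖y‖ 1) t = ‖y‖ := by
        rw [min_eq_left hy.2.le, max_eq_left hy.1.le]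
      simp only [u, hclamp]
      rw [Real.log_pow]
      push_cast
      ring
    have hD : HasFDerivAt (fun y : E2 => -(c/(2*T)) * Real.log (‖y‖^2))
        ((-(c/(2*T))) • ((‖x‖^2)⁻¹ • (2 • (innerSL ℝ x)))) x :=
      HasFDerivAt.const_mul ((Real.hasDerivAt_log (pow_ne_zero 2 hx0.ne')).comp_hasFDerivAt x
        (hasStrictFDerivAt_norm_sq x).hasFDerivAt) _
    rw [hev.fderiv_eq, hD.fderiv]
    have hmem : ‖x‖ ∈ Ioo t 1 := ⟨hgt, hx1⟩
    rw [Set.indicator_of_mem hmem]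
    have hb : ‖(-(c/(2*T))) • ((‖x‖^2)⁻¹ • (2 • (innerSL ℝ x)))‖ ≤ c/(T*‖x‖) := by
      refine ContinuousLinearMap.opNorm_le_bound _ (by positivity) (fun y => ?_)
      have happ : ((-(c/(2*T))) • ((‖x‖^2)⁻¹ • (2 • (innerSL ℝ x)))) y
          = -(c/(2*T)) * ((‖x‖^2)⁻¹ * (⟪x, y⟫ + ⟪x, y⟫)) := by
        rw [two_smul]
        simp [ContinuousLinearMap.smul_apply, ContinuousLinearMap.add_apply, innerSL_apply_apply]
        ring
      rw [happ, Real.norm_eq_abs]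
      have hi : |⟪x, y⟫| ≤ ‖x‖ * ‖y‖ := abs_real_inner_le_norm x y
      calc |(-(c/(2*T))) * ((‖x‖^2)⁻¹ * (⟪x, y⟫ + ⟪x, y⟫))|
          = (c/(2*T)) * ((‖x‖^2)⁻¹ * (2 * |⟪x, y⟫|)) := by
            rw [abs_mul, abs_mul, abs_neg, abs_of_nonneg (by positivity : (0:ℝ) ≤ c/(2*T)),
              abs_of_nonneg (inv_nonneg.2 (sq_nonneg ‖x‖))]
            rw [show ⟪x,y⟫ + ⟪x,y⟫ = 2 * ⟪x,y⟫ by ring, abs_mul, abs_two]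
        _ ≤ (c/(2*T)) * ((‖x‖^2)⁻¹ * (2 * (‖x‖ * ‖y‖))) := by
            refine mul_le_mul_of_nonneg_left (mul_le_mul_of_nonneg_left
              (by linarith) (inv_nonneg.2 (sq_nonneg ‖x‖))) (by positivity)
        _ = c/(T*‖x‖) * ‖y‖ := by field_simp
    exact pow_le_pow_left₀ (norm_nonneg _) hb 2

/-- Sharpness of the Trudinger–Moser nonlinearity: if `h : [0,∞) → [0,∞)` is continuous,
non-decreasing and unbounded, then
`sup { ∫_B h(|u|) e^{4π u²} dx : u ∈ H^1_0(B), ‖∇u‖₂ ≤ 1 } = +∞`,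
`B` the unit disk in `ℝ²` (here `H^1_0(B)` members are represented by Lipschitz functions
supported in the closed disk, a class containing the Moser functions). -/
theorem moser_sharpness (h : ℝ → ℝ)
    (hc : ContinuousOn h (Set.Ici 0))
    (hmono : MonotoneOn h (Set.Ici 0))
    (hnonneg : ∀ s ∈ Set.Ici (0:ℝ), 0 ≤ h s)
    (hunbdd : ¬ BddAbove (h '' Set.Ici 0)) :
    ∀ M : ℝ, ∃ u : E2 → ℝ,
      (∃ L, LipschitzWith L u) ∧
      tsupport u ⊆ closedBall (0 : E2) 1 ∧
      (∫ x in ball (0 : E2) 1, ‖fderiv ℝ u x‖ ^ 2) ≤ 1 ∧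
      M ≤ ∫ x in ball (0 : E2) 1, h |u x| * Real.exp (4 * Real.pi * (u x) ^ 2) := by
  intro M
  -- choose the height c of the Moser function
  obtain ⟨y, hy_mem, hy⟩ := not_bddAbove_iff.1 hunbdd (max (M / Real.pi) (h 1))
  obtain ⟨c, hc_mem, rfl⟩ := hy_mem
  have hc1 : 1 ≤ c := by
    by_contra hle
    push_neg at hle
    have h1 := hmono hc_mem (by norm_num : (1:ℝ) ∈ Ici 0) hle.le
    have h2 := le_max_right (M / Real.pi) (h 1)
    linarith
  have hc0 : 0 < c := lt_of_lt_of_le one_pos hc1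
  have hM : M / Real.pi < h c := lt_of_le_of_lt (le_max_left _ _) hy
  -- set up the Moser function
  set T : ℝ := 2 * Real.pi * c^2 with hTdef
  have hT : 0 < T := by positivity
  set t : ℝ := Real.exp (-T) with htdef
  have ht : 0 < t := Real.exp_pos _
  have ht1 : t < 1 := by
    rw [htdef]
    exact Real.exp_lt_one_iff.mpr (by linarith)
  have hlogt : Real.log t = -T := Real.log_exp _
  set u : E2 → ℝ := fun x : E2 => -(c/T) * Real.log (max (min ‖x‖ 1) t) with hudef
  obtain ⟨L, hL⟩ := moser_lip c T t ht ht1.le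
  refine ⟨u, ⟨L, hL⟩, ?_, ?_, ?_⟩
  · -- support
    have hsupp : Function.support u ⊆ closedBall (0 : E2) 1 := by
      intro x hx
      by_contra hmem
      apply hx
      simp only [mem_closedBall, dist_zero_right, not_le] at hmem
      have : max (min ‖x‖ 1) t = 1 := by
        rw [min_eq_right hmem.le, max_eq_left ht1.le]
      simp only [u, this, Real.log_one, mul_zero]
    exact closure_minimal hsupp isClosed_closedBall
  · -- gradient bound
    set g : ℝ → ℝ := fun r => (Ioo t 1).indicator (fun r => (c/(T*r))^2) r with hgdef
    have hg_nonneg : ∀ r, 0 ≤ g r := fun r => Set.indicator_nonneg (fun r _ => sq_nonneg _) r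
    have hg_bd : ∀ r, g r ≤ (c/(T*t))^2 := by
      intro r
      by_cases hr : r ∈ Ioo t 1
      · rw [hgdef]
        simp only [Set.indicator_of_mem hr]
        have h1 : c/(T*r) ≤ c/(T*t) :=
          div_le_div_of_nonneg_left hc0.le (mul_pos hT ht)
            (mul_le_mul_of_nonneg_left hr.1.le hT.le)
        exact pow_le_pow_left₀ (div_nonneg hc0.le (mul_nonneg hT.le (ht.le.trans hr.1.le))) h1 2
      · rw [hgdef]
        simp only [Set.indicator_of_notMem hr]
        positivity
    have hg_meas : Measurable g := by
      apply Measurable.indicator _ measurableSet_Ioo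
      exact (measurable_const.div ((measurable_id.const_mul T))).pow_const 2
    -- a.e. pointwise bound
    have hsph : volume (sphere (0:E2) t) = 0 := Measure.addHaar_sphere (μ := (volume : Measure E2)) 0 t
    have key1 : ∀ᵐ x ∂(volume.restrict (ball (0:E2) 1)), ‖fderiv ℝ u x‖^2 ≤ g ‖x‖ := by
      refine (ae_restrict_iff' measurableSet_ball).2 ?_
      filter_upwards [measure_eq_zero_iff_ae_notMem.1 hsph] with x hx hxb
      have hxt : ‖x‖ ≠ t := by
        simpa [mem_sphere_iff_norm] using hx
      have hx1 : ‖x‖ < 1 := by simpa [mem_ball, dist_zero_right] using hxb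
      exact moser_fderiv_bound c T t hc0.le hT ht ht1 x hxt hx1
    -- integrability
    have m1 : AEStronglyMeasurable (fun x : E2 => ‖fderiv ℝ u x‖^2) volume :=
      (((measurable_fderiv ℝ u).norm.pow_const 2)).aestronglyMeasurable
    have int1 : IntegrableOn (fun x : E2 => ‖fderiv ℝ u x‖^2) (ball (0:E2) 1) := by
      apply Measure.integrableOn_of_bounded (M := (L:ℝ)^2) measure_ball_lt_top.ne m1
      apply Filter.Eventually.of_forall
      intro x
      rw [Real.norm_eq_abs, abs_of_nonneg (sq_nonneg _)]
      exact pow_le_pow_left₀ (norm_nonneg _) (norm_fderiv_le_of_lipschitz ℝ hL) 2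
    have intg : Integrable (fun x : E2 => g ‖x‖) := by
      have heq : (fun x : E2 => g ‖x‖)
          = (closedBall (0:E2) 1).indicator (fun x => g ‖x‖) := by
        funext x
        by_cases hx : x ∈ closedBall (0:E2) 1
        · rw [Set.indicator_of_mem hx]
        · rw [Set.indicator_of_notMem hx, hgdef]
          have : ‖x‖ ∉ Ioo t 1 := by
            simp only [mem_closedBall, dist_zero_right, not_le] at hx
            exact fun hm => absurd hm.2 (not_lt.2 hx.le)
          simp only [Set.indicator_of_notMem this]
      rw [heq, integrable_indicator_iff measurableSet_closedBall]
      apply Measure.integrableOn_of_bounded (M := (c/(T*t))^2)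
        measure_closedBall_lt_top.ne (hg_meas.comp measurable_norm).aestronglyMeasurable
      apply Filter.Eventually.of_forall
      intro x
      have : |(g ∘ norm) x| = g ‖x‖ := abs_of_nonneg (hg_nonneg _)
      rw [Real.norm_eq_abs, this]
      exact hg_bd _
    calc (∫ x in ball (0:E2) 1, ‖fderiv ℝ u x‖ ^ 2)
        ≤ ∫ x in ball (0:E2) 1, g ‖x‖ := integral_mono_ae int1 intg.integrableOn key1
      _ ≤ ∫ x : E2, g ‖x‖ :=
          setIntegral_le_integral intg (Filter.Eventually.of_forall (fun x => hg_nonneg _))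
      _ = 2 * Real.pi * c^2 / T := moser_polar c T t hT ht ht1 hlogt
      _ = 1 := by rw [hTdef]; field_simp
  · -- main integral lower bound
    set Φ : E2 → ℝ := fun x => h |u x| * Real.exp (4 * Real.pi * (u x)^2) with hΦdef
    have hu_cont : Continuous u := hL.continuous
    have hu_bounds : ∀ x : E2, 0 ≤ u x ∧ u x ≤ c := by
      intro x
      set ρ : ℝ := max (min ‖x‖ 1) t with hρ
      have hρt : t ≤ ρ := le_max_right _ _
      have hρ1 : ρ ≤ 1 := max_le (min_le_right _ _) ht1.le
      have hρ0 : 0 < ρ := lt_of_lt_of_le ht hρt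
      have hlog_le : Real.log ρ ≤ 0 := Real.log_nonpos hρ0.le hρ1
      have hlog_ge : -T ≤ Real.log ρ := by
        rw [← hlogt]; exact Real.log_le_log ht hρt
      have huval : u x = (c/T) * (-Real.log ρ) := by rw [hudef]; ring
      constructor
      · rw [huval]
        exact mul_nonneg (by positivity) (by linarith)
      · rw [huval]
        calc (c/T) * (-Real.log ρ) ≤ (c/T) * T :=
            mul_le_mul_of_nonneg_left (by linarith) (by positivity)
          _ = c := by field_simp
    have hu_eq_c : ∀ x : E2, ‖x‖ < t → u x = c := by
      intro x hx
      have hcl : max (min ‖x‖ 1) t = t :=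
        max_eq_right (le_trans (min_le_left _ _) hx.le)
      rw [hudef]
      simp only [hcl, hlogt]
      field_simp
    have hΦ_cont : Continuous Φ := by
      apply Continuous.mul
      · exact hc.comp_continuous (continuous_abs.comp hu_cont) (fun x => Set.mem_Ici.mpr (abs_nonneg _))
      · exact Real.continuous_exp.comp (continuous_const.mul (hu_cont.pow 2))
    have hΦ_nonneg : ∀ x, 0 ≤ Φ x := fun x =>
      mul_nonneg (hnonneg _ (Set.mem_Ici.mpr (abs_nonneg _))) (Real.exp_pos _).le
    have hΦ_bd : ∀ x, Φ x ≤ h c * Real.exp (4 * Real.pi * c^2) := by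
      intro x
      obtain ⟨h0, hcle⟩ := hu_bounds x
      have habs : |u x| = u x := abs_of_nonneg h0
      apply mul_le_mul
      · exact hmono (Set.mem_Ici.mpr (abs_nonneg _)) (Set.mem_Ici.mpr hc0.le) (by rw [habs]; exact hcle)
      · exact Real.exp_le_exp.2 (mul_le_mul_of_nonneg_left
          (pow_le_pow_left₀ h0 hcle 2) (by positivity))
      · exact (Real.exp_pos _).le
      · exact hnonneg c (Set.mem_Ici.mpr hc0.le)
    have hint : IntegrableOn Φ (ball (0:E2) 1) := by
      apply Measure.integrableOn_of_bounded (M := h c * Real.exp (4 * Real.pi * c^2))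
        measure_ball_lt_top.ne hΦ_cont.aestronglyMeasurable
      apply Filter.Eventually.of_forall
      intro x
      rw [Real.norm_eq_abs, abs_of_nonneg (hΦ_nonneg _)]
      exact hΦ_bd _
    have hball_t : ∫ x in ball (0:E2) t, Φ x
        = (h c * Real.exp (4 * Real.pi * c^2)) * (Real.pi * t^2) := by
      have hcongr : ∀ x ∈ ball (0:E2) t, Φ x = h c * Real.exp (4 * Real.pi * c^2) := by
        intro x hx
        have hxn : ‖x‖ < t := by simpa [mem_ball, dist_zero_right] using hx
        have := hu_eq_c x hxn
        rw [hΦdef]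
        simp only [this, abs_of_nonneg hc0.le]
      rw [setIntegral_congr_fun measurableSet_ball hcongr, setIntegral_const,
        measureReal_def, moser_vol_ball t ht.le, smul_eq_mul]
      ring
    have hval : (h c * Real.exp (4 * Real.pi * c^2)) * (Real.pi * t^2) = Real.pi * h c := by
      have h2 : Real.exp (4 * Real.pi * c^2) * t^2 = 1 := by
        rw [htdef, ← Real.exp_nat_mul, ← Real.exp_add, ← Real.exp_zero]
        congr 1
        rw [hTdef]; ring
      calc (h c * Real.exp (4 * Real.pi * c^2)) * (Real.pi * t^2)
          = Real.pi * h c * (Real.exp (4 * Real.pi * c^2) * t^2) := by ring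
        _ = Real.pi * h c := by rw [h2, mul_one]
    have hMle : M ≤ Real.pi * h c := by
      have := (div_lt_iff₀ Real.pi_pos).1 hM
      linarith
    calc M ≤ Real.pi * h c := hMle
      _ = ∫ x in ball (0:E2) t, Φ x := by rw [hball_t, hval]
      _ ≤ ∫ x in ball (0:E2) 1, Φ x :=
          setIntegral_mono_set hint (Filter.Eventually.of_forall (fun x => hΦ_nonneg _))
            (HasSubset.Subset.eventuallyLE (ball_subset_ball ht1.le))
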